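/- Let 0 < r < R, α₀ ∈ (0, π/3), and suppose ρ < min{(R^{1/3}−r^{1/3})/(6(R^{1/3}+r^{1/3})), (1 − (1/2 + cos α₀)^{1/2})²/(2 cos α₀ − 1)} and ℓ ∈ (r/L(ρ), R/U(ρ)) with L(ρ)=(1−6ρ)/√3, U(ρ)=(1+6ρ)³/(√3(1−6ρ)²). Then any triangle whose side lengths all lie in (ℓ(1−2ρ), ℓ(1+2ρ)) has circumradius δ ∈ (r, R) and all interior angles strictly greater than α₀. -/

import Mathlib

open Real EuclideanGeometry

/-- The circumradius of the triangle with vertices `x`, `y`, `z`. -/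
noncomputable def circumradius3 (x y z : EuclideanSpace ℝ (Fin 2))
    (h : AffineIndependent ℝ ![x, y, z]) : ℝ :=
  (⟨![x, y, z], h⟩ : Affine.Simplex ℝ (EuclideanSpace ℝ (Fin 2)) 2).circumradius

private lemma sin_abs_toReal (θ : Real.Angle) : Real.sin |θ.toReal| = |θ.sin| := by
  have h1 := Real.Angle.neg_pi_lt_toReal θ
  have h2 := Real.Angle.toReal_le_pi θ
  have hs : θ.sin = Real.sin θ.toReal := by
    conv_lhs => rw [← Real.Angle.coe_toReal θ]
    rw [Real.Angle.sin_coe]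
  rcases le_or_gt 0 θ.toReal with h | h
  · rw [abs_of_nonneg h, hs,
      abs_of_nonneg (Real.sin_nonneg_of_nonneg_of_le_pi h h2)]
  · rw [abs_of_neg h, hs, Real.sin_neg,
      abs_of_nonpos (Real.sin_nonpos_of_nonpos_of_neg_pi_le h.le h1.le)]

private lemma sin_angle_eq_abs_oangle_sin
    {p p₁ p₂ : EuclideanSpace ℝ (Fin 2)}
    [Fact (Module.finrank ℝ (EuclideanSpace ℝ (Fin 2)) = 2)]
    [Module.Oriented ℝ (EuclideanSpace ℝ (Fin 2)) (Fin 2)]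
    (hp₁ : p₁ ≠ p) (hp₂ : p₂ ≠ p) :
    Real.sin (∠ p₁ p p₂) = |(∡ p₁ p p₂).sin| := by
  rw [EuclideanGeometry.angle_eq_abs_oangle_toReal hp₁ hp₂, sin_abs_toReal]

/-- Bounds on the cosine at a vertex, from the law of cosines. -/
private lemma cos_mem {lo s c0 d1 d2 d3 cA : ℝ} (hlo : 0 < lo)
    (hs2 : s * s = 1/2 + c0) (hc0 : 1/2 < c0) (hc1 : c0 < 1)
    (h1a : lo < d1) (h1b : d1 < s * lo) (h2a : lo < d2) (h2b : d2 < s * lo)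
    (h3a : lo < d3) (h3b : d3 < s * lo)
    (heq : d3 * d3 = d1 * d1 + d2 * d2 - 2 * d1 * d2 * cA) :
    0 < cA ∧ cA < c0 := by
  have hd1 : 0 < d1 := hlo.trans h1a
  have hd2 : 0 < d2 := hlo.trans h2a
  have e1 : d1 * d1 < (s * lo) * (s * lo) := mul_self_lt_mul_self hd1.le h1b
  have e2 : d2 * d2 < (s * lo) * (s * lo) := mul_self_lt_mul_self hd2.le h2b
  have e3 : lo * lo < d3 * d3 := mul_self_lt_mul_self hlo.le h3a
  have e3' : d3 * d3 < (s * lo) * (s * lo) :=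
    mul_self_lt_mul_self (hlo.trans h3a).le h3b
  have e1' : lo * lo < d1 * d1 := mul_self_lt_mul_self hlo.le h1a
  have e2' : lo * lo < d2 * d2 := mul_self_lt_mul_self hlo.le h2a
  have e4 : lo * lo < d1 * d2 := mul_lt_mul'' h1a h2a hlo.le hlo.le
  have hdd : 0 < 2 * d1 * d2 := by positivity
  constructor
  · by_contra hcon
    push_neg at hcon
    have : 2 * d1 * d2 * cA ≤ 0 :=
      mul_nonpos_of_nonneg_of_nonpos hdd.le hcon
    nlinarith [mul_self_nonneg lo]
  · have e5 : c0 * (lo * lo) < c0 * (d1 * d2) :=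
      mul_lt_mul_of_pos_left e4 (by linarith)
    have key : 2 * d1 * d2 * cA < 2 * d1 * d2 * c0 := by nlinarith
    exact lt_of_mul_lt_mul_left key hdd.le

/-- From cosine bounds to angle bounds. -/
private lemma angle_bounds {α₀ θ : ℝ} (hα0 : 0 < α₀) (hα3 : α₀ < π / 3)
    (hθ0 : 0 ≤ θ) (hθπ : θ ≤ π) (h1 : 0 < Real.cos θ)
    (h2 : Real.cos θ < Real.cos α₀) : α₀ < θ ∧ θ < π / 2 := by
  have hπ := Real.pi_pos
  constructor
  · exact (Real.strictAntiOn_cos.lt_iff_gt ⟨hθ0, hθπ⟩ ⟨hα0.le, by linarith⟩).mp h2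
  · by_contra hcon
    push_neg at hcon
    have := Real.cos_nonpos_of_pi_div_two_le_of_le hcon (by linarith)
    linarith

private lemma lower_aux {lo δ θ a : ℝ} (hθ0 : 0 < θ) (hθ : θ ≤ π / 3)
    (hδ : 0 < δ) (hside : lo < a) (he : a = 2 * δ * Real.sin θ) :
    lo / Real.sqrt 3 < δ := by
  have hq0 : (0:ℝ) < Real.sqrt 3 := Real.sqrt_pos.mpr (by norm_num)
  have hπ := Real.pi_pos
  have hsin : Real.sin θ ≤ Real.sqrt 3 / 2 := by
    rw [← Real.sin_pi_div_three]
    exact Real.strictMonoOn_sin.monotoneOn ⟨by linarith, by linarith⟩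
      ⟨by linarith, by linarith⟩ hθ
  rw [div_lt_iff₀ hq0]
  nlinarith [mul_nonneg hδ.le (sub_nonneg.2 hsin)]

private lemma upper_aux {hi δ θ a : ℝ} (hθ : π / 3 ≤ θ) (hθ2 : θ ≤ π / 2)
    (hδ : 0 < δ) (hside : a < hi) (he : a = 2 * δ * Real.sin θ) :
    δ < hi / Real.sqrt 3 := by
  have hq0 : (0:ℝ) < Real.sqrt 3 := Real.sqrt_pos.mpr (by norm_num)
  have hπ := Real.pi_pos
  have hsin : Real.sqrt 3 / 2 ≤ Real.sin θ := by
    rw [← Real.sin_pi_div_three]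
    exact Real.strictMonoOn_sin.monotoneOn ⟨by linarith, by linarith⟩
      ⟨by linarith, by linarith⟩ hθ
  rw [lt_div_iff₀ hq0]
  nlinarith [mul_nonneg hδ.le (sub_nonneg.2 hsin)]

private lemma key_poly {ρ : ℝ} (hρ0 : 0 < ρ) :
    (1 + 2*ρ) * (1 - 6*ρ)^2 ≤ (1 + 6*ρ)^3 := by
  nlinarith [hρ0, mul_pos hρ0 hρ0, mul_pos (mul_pos hρ0 hρ0) hρ0]

/-- Circumradius bounds from the law of sines and angle bounds. -/
private lemma delta_bounds {lo hi δ A B C a b c : ℝ}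
    (hA1 : 0 < A) (hA2 : A < π / 2) (hB1 : 0 < B) (hB2 : B < π / 2)
    (hC1 : 0 < C) (hC2 : C < π / 2) (hsum : A + B + C = π)
    (ha : a ∈ Set.Ioo lo hi) (hb : b ∈ Set.Ioo lo hi) (hc : c ∈ Set.Ioo lo hi)
    (hea : a = 2 * δ * Real.sin A) (heb : b = 2 * δ * Real.sin B)
    (hec : c = 2 * δ * Real.sin C) (hδ : 0 < δ) :
    lo / Real.sqrt 3 < δ ∧ δ < hi / Real.sqrt 3 := by
  constructor
  · have h : A ≤ π / 3 ∨ B ≤ π / 3 ∨ C ≤ π / 3 := by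
      by_contra hcon; push_neg at hcon
      obtain ⟨h1, h2, h3⟩ := hcon; linarith
    rcases h with h | h | h
    · exact lower_aux hA1 h hδ ha.1 hea
    · exact lower_aux hB1 h hδ hb.1 heb
    · exact lower_aux hC1 h hδ hc.1 hec
  · have h : π / 3 ≤ A ∨ π / 3 ≤ B ∨ π / 3 ≤ C := by
      by_contra hcon; push_neg at hcon
      obtain ⟨h1, h2, h3⟩ := hcon; linarith
    rcases h with h | h | h
    · exact upper_aux h hA2.le hδ ha.2 hea
    · exact upper_aux h hB2.le hδ hb.2 heb
    · exact upper_aux h hC2.le hδ hc.2 hec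

set_option maxHeartbeats 1000000 in
theorem hardcore_satisfied_for_pseudo_periodic
    (r R α₀ ρ ℓ : ℝ) (hr : 0 < r) (hrR : r < R) (hα : α₀ ∈ Set.Ioo 0 (π/3))
    (hρ0 : 0 < ρ)
    (hρ : ρ < min ((R ^ ((1:ℝ)/3) - r ^ ((1:ℝ)/3)) / (6 * (R ^ ((1:ℝ)/3) + r ^ ((1:ℝ)/3))))
      ((1 - Real.sqrt (1/2 + Real.cos α₀))^2 / (2 * Real.cos α₀ - 1)))
    (hℓ : ℓ ∈ Set.Ioo (r / ((1 - 6*ρ) / Real.sqrt 3))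
      (R / ((1 + 6*ρ)^3 / (Real.sqrt 3 * (1 - 6*ρ)^2))))
    (x y z : EuclideanSpace ℝ (Fin 2)) (h : AffineIndependent ℝ ![x, y, z])
    (hxy : dist x y ∈ Set.Ioo (ℓ * (1 - 2*ρ)) (ℓ * (1 + 2*ρ)))
    (hyz : dist y z ∈ Set.Ioo (ℓ * (1 - 2*ρ)) (ℓ * (1 + 2*ρ)))
    (hzx : dist z x ∈ Set.Ioo (ℓ * (1 - 2*ρ)) (ℓ * (1 + 2*ρ))) :
    circumradius3 x y z h ∈ Set.Ioo r R ∧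
    (α₀ < ∠ x y z ∧ α₀ < ∠ y z x ∧ α₀ < ∠ z x y) := by
  haveI : Fact (Module.finrank ℝ (EuclideanSpace ℝ (Fin 2)) = 2) :=
    ⟨finrank_euclideanSpace_fin⟩
  haveI : Module.Oriented ℝ (EuclideanSpace ℝ (Fin 2)) (Fin 2) :=
    ⟨(EuclideanSpace.basisFun (Fin 2) ℝ).toBasis.orientation⟩
  have hπ := Real.pi_pos
  obtain ⟨hα0, hα3⟩ := hα
  -- basic numeric setup
  set c0 := Real.cos α₀ with hc0def
  have hc0l : 1/2 < c0 := by
    have := Real.cos_lt_cos_of_nonneg_of_le_pi (by positivity : (0:ℝ) ≤ α₀)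
      (by linarith) hα3
    rw [Real.cos_pi_div_three] at this
    linarith
  have hc0u : c0 < 1 := by
    have := Real.cos_lt_cos_of_nonneg_of_le_pi le_rfl (by linarith) hα0
    rw [Real.cos_zero] at this
    linarith
  set s := Real.sqrt (1/2 + c0) with hsdef
  have hs2 : s * s = 1/2 + c0 := Real.mul_self_sqrt (by linarith)
  have hs0 : 0 < s := Real.sqrt_pos.mpr (by linarith)
  have hs1 : 1 < s := by
    rw [hsdef]
    exact (Real.lt_sqrt (by norm_num)).mpr (by norm_num; linarith)
  have hs32 : s * s < 3/2 := by linarith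
  -- ρ < 1/6
  have hr3 : (0:ℝ) < r ^ ((1:ℝ)/3) := Real.rpow_pos_of_pos hr _
  have hR3 : (0:ℝ) < R ^ ((1:ℝ)/3) := Real.rpow_pos_of_pos (hr.trans hrR) _
  have hρ16 : ρ < 1/6 := by
    have h1 := (hρ.trans_le (min_le_left _ _))
    have h2 : (R ^ ((1:ℝ)/3) - r ^ ((1:ℝ)/3)) / (6 * (R ^ ((1:ℝ)/3) + r ^ ((1:ℝ)/3))) < 1/6 := by
      rw [div_lt_div_iff₀ (by positivity) (by norm_num)]
      linarith
    exact h1.trans h2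
  -- ρ constraint from the angle part of the min
  have hρs : 2 * ρ * (s + 1) < s - 1 := by
    have h1 := hρ.trans_le (min_le_right _ _)
    have h2 : (0:ℝ) < 2 * c0 - 1 := by linarith
    rw [lt_div_iff₀ h2] at h1
    by_contra hcon
    push_neg at hcon
    have h4 : (s - 1) * (s - 1) ≤ 2 * ρ * (s + 1) * (s - 1) :=
      mul_le_mul_of_nonneg_right hcon (by linarith)
    have h5 : ρ * (2 * c0 - 1) = 2 * ρ * (s + 1) * (s - 1) := by
      linear_combination (-2 * ρ) * hs2
    nlinarith [h1, h4, h5]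
  -- ℓ positive, side bounds
  have hq0 : (0:ℝ) < Real.sqrt 3 := Real.sqrt_pos.mpr (by norm_num)
  have hq2 : Real.sqrt 3 * Real.sqrt 3 = 3 := Real.mul_self_sqrt (by norm_num)
  have hLpos : (0:ℝ) < (1 - 6*ρ) / Real.sqrt 3 := by
    apply div_pos (by linarith) hq0
  have hℓ0 : 0 < ℓ := lt_trans (div_pos hr hLpos) hℓ.1
  set lo := ℓ * (1 - 2*ρ) with hlodef
  set hi := ℓ * (1 + 2*ρ) with hhidef
  have hlo0 : 0 < lo := by
    apply mul_pos hℓ0; linarith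
  have hhislo : hi < s * lo := by
    rw [hhidef, hlodef]
    have h' : 1 + 2*ρ < s * (1 - 2*ρ) := by nlinarith [hρs]
    have h'' := mul_lt_mul_of_pos_left h' hℓ0
    nlinarith [h'']
  -- distinct points
  have hxy0 : 0 < dist x y := lt_trans hlo0 hxy.1
  have hyz0 : 0 < dist y z := lt_trans hlo0 hyz.1
  have hzx0 : 0 < dist z x := lt_trans hlo0 hzx.1
  have hxney : x ≠ y := by rw [← dist_pos]; exact hxy0
  have hynez : y ≠ z := by rw [← dist_pos]; exact hyz0
  have hznex : z ≠ x := by rw [← dist_pos]; exact hzx0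
  -- cosine bounds at the three vertices (law of cosines)
  have hd1s : dist x y < s * lo := lt_trans hxy.2 hhislo
  have hd2s : dist y z < s * lo := lt_trans hyz.2 hhislo
  have hd3s : dist z x < s * lo := lt_trans hzx.2 hhislo
  have heqA : dist z x * dist z x =
      dist x y * dist x y + dist y z * dist y z -
        2 * dist x y * dist y z * Real.cos (∠ x y z) := by
    have := EuclideanGeometry.law_cos x y z
    rwa [dist_comm x z, dist_comm z y] at this
  have heqB : dist x y * dist x y =
      dist y z * dist y z + dist z x * dist z x -
        2 * dist y z * dist z x * Real.cos (∠ y z x) := by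
    have := EuclideanGeometry.law_cos y z x
    rwa [dist_comm y x, dist_comm x z] at this
  have heqC : dist y z * dist y z =
      dist z x * dist z x + dist x y * dist x y -
        2 * dist z x * dist x y * Real.cos (∠ z x y) := by
    have := EuclideanGeometry.law_cos z x y
    rwa [dist_comm z y, dist_comm y x] at this
  have hcA := cos_mem hlo0 hs2 hc0l hc0u hxy.1 hd1s hyz.1 hd2s hzx.1 hd3s heqA
  have hcB := cos_mem hlo0 hs2 hc0l hc0u hyz.1 hd2s hzx.1 hd3s hxy.1 hd1s heqB
  have hcC := cos_mem hlo0 hs2 hc0l hc0u hzx.1 hd3s hxy.1 hd1s hyz.1 hd2s heqC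
  -- angle bounds
  have hAb := angle_bounds hα0 hα3 (EuclideanGeometry.angle_nonneg x y z)
    (EuclideanGeometry.angle_le_pi x y z) hcA.1 hcA.2
  have hBb := angle_bounds hα0 hα3 (EuclideanGeometry.angle_nonneg y z x)
    (EuclideanGeometry.angle_le_pi y z x) hcB.1 hcB.2
  have hCb := angle_bounds hα0 hα3 (EuclideanGeometry.angle_nonneg z x y)
    (EuclideanGeometry.angle_le_pi z x y) hcC.1 hcC.2
  refine ⟨?_, hAb.1, hBb.1, hCb.1⟩
  -- circumradius
  set t : Affine.Triangle ℝ (EuclideanSpace ℝ (Fin 2)) := ⟨![x, y, z], h⟩ with htdef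
  have hp0 : t.points 0 = x := rfl
  have hp1 : t.points 1 = y := rfl
  have hp2 : t.points 2 = z := rfl
  set δ := t.circumradius with hδdef
  have hcirc : circumradius3 x y z h = δ := rfl
  have hsA : 0 < Real.sin (∠ x y z) :=
    Real.sin_pos_of_pos_of_lt_pi (lt_trans hα0 hAb.1) (by linarith [hAb.2])
  have hsB : 0 < Real.sin (∠ y z x) :=
    Real.sin_pos_of_pos_of_lt_pi (lt_trans hα0 hBb.1) (by linarith [hBb.2])
  have hsC : 0 < Real.sin (∠ z x y) :=
    Real.sin_pos_of_pos_of_lt_pi (lt_trans hα0 hCb.1) (by linarith [hCb.2])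
  -- law of sines at each vertex
  have hlawA : dist z x = 2 * δ * Real.sin (∠ x y z) := by
    have hls := t.dist_div_sin_oangle_eq_two_mul_circumradius
      (i₁ := 0) (i₂ := 1) (i₃ := 2) (by decide) (by decide) (by decide)
    rw [hp0, hp1, hp2, ← sin_angle_eq_abs_oangle_sin hxney hynez.symm] at hls
    rw [div_eq_iff hsA.ne'] at hls
    rw [dist_comm z x]; linarith [hls]
  have hlawB : dist x y = 2 * δ * Real.sin (∠ y z x) := by
    have hls := t.dist_div_sin_oangle_eq_two_mul_circumradius
      (i₁ := 1) (i₂ := 2) (i₃ := 0) (by decide) (by decide) (by decide)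
    rw [hp0, hp1, hp2, ← sin_angle_eq_abs_oangle_sin hynez hznex.symm] at hls
    rw [div_eq_iff hsB.ne'] at hls
    rw [dist_comm x y] at hxy ⊢
    linarith [hls]
  have hlawC : dist y z = 2 * δ * Real.sin (∠ z x y) := by
    have hls := t.dist_div_sin_oangle_eq_two_mul_circumradius
      (i₁ := 2) (i₂ := 0) (i₃ := 1) (by decide) (by decide) (by decide)
    rw [hp0, hp1, hp2, ← sin_angle_eq_abs_oangle_sin hznex hxney.symm] at hls
    rw [div_eq_iff hsC.ne'] at hls
    rw [dist_comm y z] at hyz ⊢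
    linarith [hls]
  have hδ0 : 0 < δ := by
    by_contra hcon
    push_neg at hcon
    have h1 : 2 * δ * Real.sin (∠ x y z) ≤ 0 :=
      mul_nonpos_of_nonpos_of_nonneg (by linarith) hsA.le
    linarith [hlawA ▸ hzx0]
  -- angle sum
  have hsum : ∠ x y z + ∠ y z x + ∠ z x y = π :=
    EuclideanGeometry.angle_add_angle_add_angle_eq_pi z hxney.symm
  have hdb := delta_bounds (lt_trans hα0 hAb.1) hAb.2 (lt_trans hα0 hBb.1) hBb.2
    (lt_trans hα0 hCb.1) hCb.2 hsum hzx hxy hyz hlawA hlawB hlawC hδ0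
  -- final numeric bounds
  have hrlo : r < lo / Real.sqrt 3 := by
    have h1 : r < ℓ * ((1 - 6*ρ) / Real.sqrt 3) := (div_lt_iff₀ hLpos).mp hℓ.1
    have h2 : ℓ * ((1 - 6*ρ) / Real.sqrt 3) ≤ lo / Real.sqrt 3 := by
      rw [← sub_nonneg]
      have e : lo / Real.sqrt 3 - ℓ * ((1 - 6*ρ) / Real.sqrt 3) =
          ℓ * (4*ρ) / Real.sqrt 3 := by
        rw [hlodef]; ring
      rw [e]; positivity
    linarith
  have h6ρ : (0:ℝ) < 1 - 6*ρ := by linarith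
  have hUpos : (0:ℝ) < (1 + 6*ρ)^3 / (Real.sqrt 3 * (1 - 6*ρ)^2) :=
    div_pos (by positivity) (mul_pos hq0 (pow_pos h6ρ 2))
  have hkey : (1 + 2*ρ) * (1 - 6*ρ)^2 ≤ (1 + 6*ρ)^3 := key_poly hρ0
  have hhiR : hi / Real.sqrt 3 < R := by
    have h1 : ℓ * ((1 + 6*ρ)^3 / (Real.sqrt 3 * (1 - 6*ρ)^2)) < R :=
      (lt_div_iff₀ hUpos).mp hℓ.2
    have h2 : hi / Real.sqrt 3 ≤ ℓ * ((1 + 6*ρ)^3 / (Real.sqrt 3 * (1 - 6*ρ)^2)) := by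
      have hU' : ℓ * ((1 + 6*ρ)^3 / (Real.sqrt 3 * (1 - 6*ρ)^2)) =
          (ℓ * (1 + 6*ρ)^3) / (Real.sqrt 3 * (1 - 6*ρ)^2) := by ring
      rw [hhidef, hU', div_le_div_iff₀ hq0 (mul_pos hq0 (pow_pos h6ρ 2))]
      have hk2 := mul_le_mul_of_nonneg_left hkey (mul_nonneg hℓ0.le hq0.le)
      linarith [hk2]
    linarith
  rw [hcirc]
  exact ⟨lt_trans hrlo hdb.1, lt_trans hdb.2 hhiR⟩
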